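/- Let data be linearly separable at threshold θ* (y = 1 iff x ≥ θ*), so θ_C = θ* has accuracy 1 on unmanipulated data. Let X(θ,B) = {x < θ : c(x,θ) ≤ B} and suppose θ_F > θ_C. If x_F := inf X(θ_F,B) ≤ θ_C, then the post-manipulation accuracy of θ_F equals 1 − P(x ∈ [x_F, θ_C]), the post-manipulation accuracy of θ_C equals 1 − P(x ∈ X(θ_C,B)), and since c is monotone in |x−x'| gives x_F > x_C := inf X(θ_C,B), θ_F is strictly more accurate than θ_C on manipulated data. -/

import Mathlib

open Set MeasureTheory ENNReal

/-- Accuracy reversal, case `x_F ≤ θ_C`.  Data is linearly separable at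
`θ_C` (true label `y = 1` iff `θ_C ≤ x`), agents with `x < θ` and
`c(x,θ) ≤ B` manipulate to `θ`, and `θ_F > θ_C`.  If
`x_F = inf X(θ_F,B) ≤ θ_C`, then the post-manipulation accuracy of `θ_F` is
`1 − P(x ∈ [x_F, θ_C])`, that of `θ_C` is `1 − P(x ∈ X(θ_C,B))`, and since the
monotone cost gives `x_C < x_F`, `θ_F` is strictly more accurate than `θ_C`. -/
theorem accuracy_reversal_case_low
    (μ : Measure ℝ) [IsProbabilityMeasure μ] [NullSingletonClass μ]
    (hfull : ∀ a b : ℝ, a < b → 0 < μ (Ioo a b))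
    (ρ : ℝ → ℝ) (hρ : StrictMono ρ) (hρ0 : ρ 0 = 0)
    (c : ℝ → ℝ → ℝ) (hc : ∀ x x', c x x' = ρ |x' - x|)
    (θC θF B : ℝ) (hB : 0 ≤ B) (hθ : θC < θF)
    (X : ℝ → Set ℝ) (hXdef : ∀ θ, X θ = {x | x < θ ∧ c x θ ≤ B})
    (xF xC : ℝ) (hxF : xF = sInf (X θF)) (hxC : xC = sInf (X θC))
    (hneF : (X θF).Nonempty) (hneC : (X θC).Nonempty)
    (hbF : BddBelow (X θF)) (hbC : BddBelow (X θC))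
    (hcase : xF ≤ θC)
    (acc : ℝ → ℝ≥0∞)
    (hacc : ∀ θ, acc θ = μ {x | (((x < θ ∧ c x θ ≤ B) ∨ θ ≤ x) ↔ θC ≤ x)}) :
    acc θF = 1 - μ (Icc xF θC) ∧
    acc θC = 1 - μ (X θC) ∧
    xC < xF ∧
    acc θC < acc θF := by
  -- membership characterisation
  have hmem : ∀ θ x, x ∈ X θ ↔ x < θ ∧ ρ (θ - x) ≤ B := by
    intro θ x
    rw [hXdef]
    constructor
    · rintro ⟨h1, h2⟩
      rw [hc, abs_of_nonneg (by linarith)] at h2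
      exact ⟨h1, h2⟩
    · rintro ⟨h1, h2⟩
      rw [Set.mem_setOf_eq, hc, abs_of_nonneg (by linarith)]
      exact ⟨h1, h2⟩
  -- upper bound: X θ ⊆ Ico (sInf) θ for the two thresholds
  have hsubF : X θF ⊆ Ico xF θF := fun x hx =>
    ⟨hxF ▸ csInf_le hbF hx, ((hmem θF x).1 hx).1⟩
  have hsubC : X θC ⊆ Ico xC θC := fun x hx =>
    ⟨hxC ▸ csInf_le hbC hx, ((hmem θC x).1 hx).1⟩
  -- lower bound: Ioo (sInf) θ ⊆ X θ
  have hIooF : Ioo xF θF ⊆ X θF := by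
    rintro y ⟨hy1, hy2⟩
    obtain ⟨x, hxmem, hxy⟩ := exists_lt_of_csInf_lt hneF (hxF ▸ hy1)
    obtain ⟨hx1, hx2⟩ := (hmem θF x).1 hxmem
    exact (hmem θF y).2 ⟨hy2, le_trans (hρ.monotone (by linarith)) hx2⟩
  have hIooC : Ioo xC θC ⊆ X θC := by
    rintro y ⟨hy1, hy2⟩
    obtain ⟨x, hxmem, hxy⟩ := exists_lt_of_csInf_lt hneC (hxC ▸ hy1)
    obtain ⟨hx1, hx2⟩ := (hmem θC x).1 hxmem
    exact (hmem θC y).2 ⟨hy2, le_trans (hρ.monotone (by linarith)) hx2⟩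
  -- xC < θC, xF < θF
  have hxCθ : xC < θC := by
    obtain ⟨x, hx⟩ := hneC
    exact lt_of_le_of_lt (hxC ▸ csInf_le hbC hx) ((hmem θC x).1 hx).1
  -- xC < xF : xC + (θF - θC) is a lower bound for X θF
  have hxCxF : xC < xF := by
    have hlb : ∀ x ∈ X θF, xC + (θF - θC) ≤ x := by
      intro x hx
      obtain ⟨hx1, hx2⟩ := (hmem θF x).1 hx
      have hxm : x - (θF - θC) ∈ X θC := by
        refine (hmem θC _).2 ⟨by linarith, ?_⟩
        have : θC - (x - (θF - θC)) = θF - x := by ring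
        rwa [this]
      have := hxC ▸ csInf_le hbC hxm
      linarith
    have : xC + (θF - θC) ≤ xF := hxF ▸ le_csInf hneF hlb
    linarith
  -- measure facts
  have h1ne : (1 : ℝ≥0∞) ≠ ∞ := one_ne_top
  have hμXC : μ (X θC) = μ (Icc xC θC) := by
    apply le_antisymm
    · exact le_trans (measure_mono hsubC) (measure_mono Ico_subset_Icc_self)
    · calc μ (Icc xC θC) = μ (Ioo xC θC) := (measure_congr Ioo_ae_eq_Icc).symm
        _ ≤ μ (X θC) := measure_mono hIooC
  have hμIooC : μ (Ioo xC θC) = μ (X θC) := by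
    rw [hμXC]; exact measure_congr Ioo_ae_eq_Icc
  -- accuracy of θC : success set is exactly (X θC)ᶜ
  have haccC : acc θC = 1 - μ (X θC) := by
    have hset : {x : ℝ | (((x < θC ∧ c x θC ≤ B) ∨ θC ≤ x) ↔ θC ≤ x)} = (X θC)ᶜ := by
      ext x
      simp only [Set.mem_setOf_eq, Set.mem_compl_iff]
      rw [hXdef]
      constructor
      · intro h hx
        have := h.1 (Or.inl hx)
        exact absurd this (not_le.2 hx.1)
      · intro h
        constructor
        · rintro (hx | hx)
          · exact absurd hx h
          · exact hx
        · exact fun hx => Or.inr hx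
    rw [hacc, hset]
    -- sandwich between complements of Icc and Ioo
    have hle1 : μ (Icc xC θC)ᶜ ≤ μ (X θC)ᶜ :=
      measure_mono (compl_subset_compl.2 (hsubC.trans Ico_subset_Icc_self))
    have hle2 : μ (X θC)ᶜ ≤ μ (Ioo xC θC)ᶜ :=
      measure_mono (compl_subset_compl.2 hIooC)
    rw [prob_compl_eq_one_sub measurableSet_Icc, ← hμXC] at hle1
    rw [prob_compl_eq_one_sub measurableSet_Ioo, hμIooC] at hle2
    exact le_antisymm hle2 hle1
  -- accuracy of θF
  have haccF : acc θF = 1 - μ (Icc xF θC) := by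
    rw [hacc]
    set S := {x : ℝ | (((x < θF ∧ c x θF ≤ B) ∨ θF ≤ x) ↔ θC ≤ x)} with hS
    have hSX : ∀ x, x ∈ S ↔ ((x ∈ X θF ∨ θF ≤ x) ↔ θC ≤ x) := by
      intro x; rw [hS, hXdef]; rfl
    have hA : (Icc xF θC)ᶜ ⊆ S := by
      intro x hx
      rw [hSX]
      rcases lt_or_ge x xF with h | hge
      · constructor
        · rintro (hx' | hx')
          · exact absurd (hsubF hx').1 (not_le.2 h)
          · linarith
        · intro hx'; linarith
      · have h : θC < x := by
          by_contra hno; push_neg at hno; exact hx ⟨hge, hno⟩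
        refine ⟨fun _ => le_of_lt h, fun _ => ?_⟩
        rcases lt_or_ge x θF with hxθF | hxθF
        · exact Or.inl (hIooF ⟨lt_of_le_of_lt hcase h, hxθF⟩)
        · exact Or.inr hxθF
    have hB' : S ⊆ (Ioo xF θC)ᶜ := by
      intro x hx hmemIoo
      obtain ⟨h1, h2⟩ := hmemIoo
      rw [hSX] at hx
      have : θC ≤ x := hx.1 (Or.inl (hIooF ⟨h1, h2.trans hθ⟩))
      linarith
    have hle1 : 1 - μ (Icc xF θC) ≤ μ S := by
      rw [← prob_compl_eq_one_sub measurableSet_Icc]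
      exact measure_mono hA
    have hle2 : μ S ≤ 1 - μ (Icc xF θC) := by
      calc μ S ≤ μ (Ioo xF θC)ᶜ := measure_mono hB'
        _ = 1 - μ (Ioo xF θC) := prob_compl_eq_one_sub measurableSet_Ioo
        _ = 1 - μ (Icc xF θC) := by rw [measure_congr Ioo_ae_eq_Icc]
    exact le_antisymm hle2 hle1
  -- strict inequality of measures
  have hmeas : μ (Icc xF θC) < μ (X θC) := by
    have hdisj : Disjoint (Ioo xC xF) (Icc xF θC) := by
      apply Set.disjoint_left.2
      rintro x ⟨_, h2⟩ ⟨h3, _⟩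
      linarith
    have hsubU : Ioo xC xF ∪ Icc xF θC ⊆ Icc xC θC := by
      rintro x (⟨h1, h2⟩ | ⟨h1, h2⟩)
      · exact ⟨le_of_lt h1, by linarith⟩
      · exact ⟨by linarith [le_of_lt hxCxF], h2⟩
    have : μ (Ioo xC xF ∪ Icc xF θC) = μ (Ioo xC xF) + μ (Icc xF θC) := measure_union hdisj measurableSet_Icc
    have hle : μ (Ioo xC xF) + μ (Icc xF θC) ≤ μ (Icc xC θC) := by
      rw [← this]; exact measure_mono hsubU
    have hpos : 0 < μ (Ioo xC xF) := hfull _ _ hxCxF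
    have hfin : μ (Icc xF θC) ≠ ∞ := measure_ne_top μ _
    calc μ (Icc xF θC) < μ (Icc xF θC) + μ (Ioo xC xF) :=
          ENNReal.lt_add_right hfin (ne_of_gt hpos)
      _ = μ (Ioo xC xF) + μ (Icc xF θC) := add_comm _ _
      _ ≤ μ (Icc xC θC) := hle
      _ = μ (X θC) := hμXC.symm
  -- final accuracy comparison
  have hfinal : acc θC < acc θF := by
    rw [haccC, haccF]
    have hXCle : μ (X θC) ≤ 1 := prob_le_one
    exact (AddLECancellable.tsub_lt_tsub_iff_left_of_le
      (ENNReal.cancel_of_ne h1ne) (ENNReal.cancel_of_ne (measure_ne_top μ _)) hXCle).2 hmeas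
  exact ⟨haccF, haccC, hxCxF, hfinal⟩
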